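/- Fourier reduction: let (P,Q,x) be a C¹ solution of the two-row system with ΔW(ξ) = U cos(2πξ/ℓ), and define for n ≥ 1 the Fourier coefficients pₙᶜ(t) = (2/ℓ)∫₀^ℓ P(ξ,t)cos(2nπξ/ℓ)dξ, pₙˢ(t) = (2/ℓ)∫₀^ℓ P(ξ,t)sin(2nπξ/ℓ)dξ (and qₙᶜ, qₙˢ analogously from Q), and aₙ = (2/ℓ)∫₀^ℓ ω_B(ξ)cos(2nπξ/ℓ)dξ, bₙ = (2/ℓ)∫₀^ℓ ω_B(ξ)sin(2nπξ/ℓ)dξ. Then with v(t) = x'(t), for each n ≥ 1 and all t ≥ 0: (pₙᶜ)'(t) + (2πn/ℓ)v(t)pₙˢ(t) = −a₀pₙᶜ(t) + aₙ/ℓ, (pₙˢ)'(t) − (2πn/ℓ)v(t)pₙᶜ(t) = −a₀pₙˢ(t) + bₙ/ℓ, (qₙᶜ)'(t) − (2πn/ℓ)v(t)qₙˢ(t) = −a₀qₙᶜ(t) + aₙ/ℓ, (qₙˢ)'(t) + (2πn/ℓ)v(t)qₙᶜ(t) = −a₀qₙˢ(t) + bₙ/ℓ; moreover the force balance becomes 2η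 x'(t) + 2k x(t) + πU(p₁ˢ(t) − q₁ˢ(t)) = 0. -/

import Mathlib

open Real Set MeasureTheory intervalIntegral

/-- The `n`-th cosine Fourier coefficient `(2/ℓ)∫₀^ℓ f(ξ) cos(2nπξ/ℓ) dξ`. -/
noncomputable def fourCos (ℓ : ℝ) (f : ℝ → ℝ) (n : ℕ) : ℝ :=
  (2 / ℓ) * ∫ ξ in (0 : ℝ)..ℓ, f ξ * Real.cos (2 * n * π * ξ / ℓ)

/-- The `n`-th sine Fourier coefficient `(2/ℓ)∫₀^ℓ f(ξ) sin(2nπξ/ℓ) dξ`. -/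
noncomputable def fourSin (ℓ : ℝ) (f : ℝ → ℝ) (n : ℕ) : ℝ :=
  (2 / ℓ) * ∫ ξ in (0 : ℝ)..ℓ, f ξ * Real.sin (2 * n * π * ξ / ℓ)

/-- Time-slice derivative within `Ici 0`. -/
lemma sliceT {F : ℝ × ℝ → ℝ} (hF : ContDiffOn ℝ 1 F (univ ×ˢ Ici (0:ℝ)))
    (ξ : ℝ) {t : ℝ} (ht : 0 ≤ t) :
    HasDerivWithinAt (fun s => F (ξ, s))
      (fderivWithin ℝ F (univ ×ˢ Ici (0:ℝ)) (ξ, t) (0, 1)) (Ici 0) t := by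
  have hmem : (ξ, t) ∈ (univ ×ˢ Ici (0:ℝ) : Set (ℝ × ℝ)) := by
    simp [Set.mem_prod, ht]
  have hd := (hF.differentiableOn one_ne_zero (ξ, t) hmem).hasFDerivWithinAt
  have hg : HasDerivWithinAt (fun s : ℝ => (ξ, s)) (((0:ℝ), (1:ℝ))) (Ici 0) t :=
    (HasDerivAt.prodMk (hasDerivAt_const t ξ) (hasDerivAt_id t)).hasDerivWithinAt
  have hmaps : MapsTo (fun s : ℝ => (ξ, s)) (Ici 0) (univ ×ˢ Ici (0:ℝ)) := by
    intro s hs; simp [Set.mem_prod, hs]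
  exact hd.comp_hasDerivWithinAt t hg hmaps

/-- Space-slice derivative (full). -/
lemma sliceX {F : ℝ × ℝ → ℝ} (hF : ContDiffOn ℝ 1 F (univ ×ˢ Ici (0:ℝ)))
    {t : ℝ} (ht : 0 ≤ t) (ξ : ℝ) :
    HasDerivAt (fun ζ => F (ζ, t))
      (fderivWithin ℝ F (univ ×ˢ Ici (0:ℝ)) (ξ, t) (1, 0)) ξ := by
  have hmem : (ξ, t) ∈ (univ ×ˢ Ici (0:ℝ) : Set (ℝ × ℝ)) := by
    simp [Set.mem_prod, ht]
  have hd := (hF.differentiableOn one_ne_zero (ξ, t) hmem).hasFDerivWithinAt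
  have hg : HasDerivWithinAt (fun ζ : ℝ => (ζ, t)) (((1:ℝ), (0:ℝ))) (univ : Set ℝ) ξ :=
    (HasDerivAt.prodMk (hasDerivAt_id ξ) (hasDerivAt_const ξ t)).hasDerivWithinAt
  have hmaps : MapsTo (fun ζ : ℝ => (ζ, t)) (univ : Set ℝ) (univ ×ˢ Ici (0:ℝ)) := by
    intro s _; simp [Set.mem_prod, ht]
  have := hd.comp_hasDerivWithinAt ξ hg hmaps
  rw [hasDerivWithinAt_univ] at this
  exact this

/-- Differentiation under the integral sign, via Fubini + FTC. -/
lemma hasDerivWithinAt_param {ℓ : ℝ} (hℓ : 0 < ℓ) {F : ℝ × ℝ → ℝ}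
    (hF : ContDiffOn ℝ 1 F (univ ×ˢ Ici (0:ℝ)))
    {φ : ℝ → ℝ} (hφ : Continuous φ) {t : ℝ} (ht : 0 ≤ t) :
    HasDerivWithinAt (fun s => ∫ ξ in (0:ℝ)..ℓ, F (ξ, s) * φ ξ)
      (∫ ξ in (0:ℝ)..ℓ, fderivWithin ℝ F (univ ×ˢ Ici (0:ℝ)) (ξ, t) (0, 1) * φ ξ)
      (Ici 0) t := by
  set S : Set (ℝ × ℝ) := univ ×ˢ Ici (0:ℝ) with hSdef
  have hS : UniqueDiffOn ℝ S := uniqueDiffOn_univ.prod (uniqueDiffOn_Ici 0)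
  set D1 : ℝ × ℝ → ℝ := fun p => fderivWithin ℝ F S p (0, 1) with hD1def
  have hD1 : ContinuousOn D1 S :=
    (hF.continuousOn_fderivWithin hS le_rfl).clm_apply continuousOn_const
  have hproj : Continuous fun p : ℝ × ℝ => (p.1, max 0 p.2) :=
    continuous_fst.prodMk (continuous_const.max continuous_snd)
  have hprojS : ∀ p : ℝ × ℝ, (p.1, max 0 p.2) ∈ S := by
    intro p; simp [hSdef, Set.mem_prod, le_max_left]
  set Dt : ℝ × ℝ → ℝ := fun p => D1 (p.1, max 0 p.2) with hDtdef
  have hDt : Continuous Dt := hD1.comp_continuous hproj hprojS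
  have hFc : Continuous fun p : ℝ × ℝ => F (p.1, max 0 p.2) :=
    hF.continuousOn.comp_continuous hproj hprojS
  set g : ℝ × ℝ → ℝ := fun p => Dt p * φ p.1 with hgdef
  have hg : Continuous g := hDt.mul (hφ.comp continuous_fst)
  set H : ℝ → ℝ := fun τ => ∫ ξ in (0:ℝ)..ℓ, Dt (ξ, τ) * φ ξ with hHdef
  have hH : Continuous H := by
    rw [hHdef]
    have : Continuous (Function.uncurry fun τ ξ => Dt (ξ, τ) * φ ξ) := by
      apply Continuous.mul
      · exact hDt.comp (continuous_snd.prodMk continuous_fst)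
      · exact hφ.comp continuous_snd
    exact intervalIntegral.continuous_parametric_intervalIntegral_of_continuous'
      (μ := volume) this 0 ℓ
  -- FTC in the time direction, for each ξ
  have hFTC : ∀ (ξ : ℝ) {s : ℝ}, 0 ≤ s →
      (∫ τ in (0:ℝ)..s, Dt (ξ, τ)) = F (ξ, s) - F (ξ, 0) := by
    intro ξ s hs
    refine intervalIntegral.integral_eq_sub_of_hasDeriv_right_of_le (f := fun τ => F (ξ, τ)) (f' := fun τ => Dt (ξ, τ)) hs ?_ ?_ ?_
    · have : ContinuousOn (fun τ : ℝ => F (ξ, max 0 τ)) (Icc 0 s) :=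
        (hFc.comp (continuous_const.prodMk continuous_id)).continuousOn
      refine this.congr fun τ hτ => ?_
      simp [max_eq_right hτ.1]
    · intro τ hτ
      have h1 : HasDerivWithinAt (fun τ => F (ξ, τ)) (D1 (ξ, τ)) (Ici 0) τ :=
        sliceT hF ξ hτ.1.le
      have h2 : HasDerivAt (fun τ => F (ξ, τ)) (D1 (ξ, τ)) τ :=
        h1.hasDerivAt (Ici_mem_nhds hτ.1)
      have heq : Dt (ξ, τ) = D1 (ξ, τ) := by simp [hDtdef, max_eq_right hτ.1.le]
      show HasDerivWithinAt _ (Dt (ξ, τ)) _ _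
      rw [heq]
      exact h2.hasDerivWithinAt
    · exact ((hDt.comp (continuous_const.prodMk continuous_id)).intervalIntegrable 0 s)
  -- key identity
  have hkey : ∀ s ∈ Ici (0:ℝ),
      (∫ ξ in (0:ℝ)..ℓ, F (ξ, s) * φ ξ)
        = (∫ ξ in (0:ℝ)..ℓ, F (ξ, 0) * φ ξ) + ∫ τ in (0:ℝ)..s, H τ := by
    intro s hs
    have hs' : (0:ℝ) ≤ s := hs
    have hcontslice : ∀ (r : ℝ), 0 ≤ r →
        Continuous (fun ξ : ℝ => F (ξ, r) * φ ξ) := by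
      intro r hr
      have : Continuous (fun ξ : ℝ => F (ξ, max 0 r) * φ ξ) :=
        (hFc.comp (continuous_id.prodMk continuous_const)).mul hφ
      simpa [max_eq_right hr] using this
    have hint : Integrable (Function.uncurry fun ξ τ => Dt (ξ, τ) * φ ξ)
        ((volume.restrict (Ioc (0:ℝ) ℓ)).prod (volume.restrict (Ioc (0:ℝ) s))) := by
      rw [Measure.prod_restrict]
      exact (hg.continuousOn.integrableOn_compact (isCompact_Icc.prod isCompact_Icc)).mono_set
        (Set.prod_mono Ioc_subset_Icc_self Ioc_subset_Icc_self)
    have hswap :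
        (∫ ξ in (0:ℝ)..ℓ, ∫ τ in (0:ℝ)..s, Dt (ξ, τ) * φ ξ)
          = ∫ τ in (0:ℝ)..s, H τ := by
      calc (∫ ξ in (0:ℝ)..ℓ, ∫ τ in (0:ℝ)..s, Dt (ξ, τ) * φ ξ)
          = ∫ ξ in Ioc (0:ℝ) ℓ, ∫ τ in Ioc (0:ℝ) s, Dt (ξ, τ) * φ ξ := by
            rw [intervalIntegral.integral_of_le hℓ.le]
            exact setIntegral_congr_fun measurableSet_Ioc fun ξ _ =>
              intervalIntegral.integral_of_le hs'
        _ = ∫ τ in Ioc (0:ℝ) s, ∫ ξ in Ioc (0:ℝ) ℓ, Dt (ξ, τ) * φ ξ :=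
            MeasureTheory.integral_integral_swap hint
        _ = ∫ τ in (0:ℝ)..s, H τ := by
            rw [intervalIntegral.integral_of_le hs']
            exact setIntegral_congr_fun measurableSet_Ioc fun τ _ =>
              (intervalIntegral.integral_of_le hℓ.le).symm
    have h1int := (hcontslice s hs').intervalIntegrable (μ := volume) 0 ℓ
    have h0int := (hcontslice 0 le_rfl).intervalIntegrable (μ := volume) 0 ℓ
    have hsub := intervalIntegral.integral_sub h1int h0int
    have e1 : (∫ ξ in (0:ℝ)..ℓ, (F (ξ, s) - F (ξ, 0)) * φ ξ)
        = ∫ ξ in (0:ℝ)..ℓ, (F (ξ, s) * φ ξ - F (ξ, 0) * φ ξ) :=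
      intervalIntegral.integral_congr fun ξ _ => by ring
    have e2 : (∫ ξ in (0:ℝ)..ℓ, (F (ξ, s) - F (ξ, 0)) * φ ξ)
        = ∫ ξ in (0:ℝ)..ℓ, ∫ τ in (0:ℝ)..s, Dt (ξ, τ) * φ ξ := by
      refine intervalIntegral.integral_congr fun ξ _ => ?_
      rw [intervalIntegral.integral_mul_const, hFTC ξ hs']
    linarith [hsub, e1, e2, hswap]
  -- conclude
  have hΦ : HasDerivAt (fun s => (∫ ξ in (0:ℝ)..ℓ, F (ξ, 0) * φ ξ)
      + ∫ τ in (0:ℝ)..s, H τ) (H t) t := by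
    have := intervalIntegral.integral_hasDerivAt_right
      (hH.intervalIntegrable 0 t) (hH.stronglyMeasurableAtFilter volume (nhds t))
      hH.continuousAt
    exact this.const_add _
  have hfinal : HasDerivWithinAt (fun s => ∫ ξ in (0:ℝ)..ℓ, F (ξ, s) * φ ξ)
      (H t) (Ici 0) t :=
    (hΦ.hasDerivWithinAt).congr (fun s hs => hkey s hs) (hkey t ht)
  have : H t = ∫ ξ in (0:ℝ)..ℓ, fderivWithin ℝ F S (ξ, t) (0, 1) * φ ξ := by
    refine intervalIntegral.integral_congr fun ξ hξ => ?_
    simp [hHdef, hDtdef, hD1def, max_eq_right ht]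
  rwa [this] at hfinal

lemma fourier_ode (ℓ a₀ ε : ℝ) (hℓ : 0 < ℓ) (ωB : ℝ → ℝ) (hωBc : Continuous ωB)
    (P : ℝ → ℝ → ℝ) (v : ℝ → ℝ)
    (hPreg : ContDiffOn ℝ 1 (fun p : ℝ × ℝ => P p.1 p.2) (univ ×ˢ Ici 0))
    (hPper : ∀ t ∈ Ici (0:ℝ), Function.Periodic (fun ξ => P ξ t) ℓ)
    (hPpde : ∀ ξ, ∀ t ∈ Ici (0:ℝ),
      derivWithin (fun s => P ξ s) (Ici 0) t + ε * (v t * deriv (fun ζ => P ζ t) ξ)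
        = -a₀ * P ξ t + ωB ξ / ℓ)
    (n : ℕ) (t : ℝ) (ht : t ∈ Ici (0:ℝ)) :
    HasDerivWithinAt (fun s => fourCos ℓ (fun ξ => P ξ s) n)
      (-a₀ * fourCos ℓ (fun ξ => P ξ t) n + fourCos ℓ ωB n / ℓ
        - ε * ((2 * π * n / ℓ) * v t * fourSin ℓ (fun ξ => P ξ t) n)) (Ici 0) t ∧
    HasDerivWithinAt (fun s => fourSin ℓ (fun ξ => P ξ s) n)
      (-a₀ * fourSin ℓ (fun ξ => P ξ t) n + fourSin ℓ ωB n / ℓ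
        + ε * ((2 * π * n / ℓ) * v t * fourCos ℓ (fun ξ => P ξ t) n)) (Ici 0) t := by
  have ht' : (0:ℝ) ≤ t := ht
  set S : Set (ℝ × ℝ) := univ ×ˢ Ici (0:ℝ) with hSdef
  have hS : UniqueDiffOn ℝ S := uniqueDiffOn_univ.prod (uniqueDiffOn_Ici 0)
  set F : ℝ × ℝ → ℝ := fun p => P p.1 p.2 with hFdef
  set Px : ℝ → ℝ := fun ξ => fderivWithin ℝ F S (ξ, t) (1, 0) with hPxdef
  -- basic continuity facts
  have hmemt : ∀ ξ : ℝ, (ξ, t) ∈ S := fun ξ => by simp [hSdef, Set.mem_prod, ht']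
  have hPt : Continuous fun ξ : ℝ => P ξ t :=
    hPreg.continuousOn.comp_continuous (continuous_id.prodMk continuous_const) hmemt
  have hPxcont : Continuous Px := by
    have hDcont : ContinuousOn (fun p => fderivWithin ℝ F S p (1, 0)) S :=
      (hPreg.continuousOn_fderivWithin hS le_rfl).clm_apply continuousOn_const
    exact hDcont.comp_continuous (continuous_id.prodMk continuous_const) hmemt
  -- trig helpers
  have hinner : ∀ ξ : ℝ, HasDerivAt (fun ξ : ℝ => 2 * (n:ℝ) * π * ξ / ℓ)
      (2 * (n:ℝ) * π / ℓ) ξ := by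
    intro ξ
    have h := ((hasDerivAt_id ξ).const_mul (2 * (n:ℝ) * π)).div_const ℓ
    simpa using h
  have hφc : Continuous fun ξ : ℝ => Real.cos (2 * (n:ℝ) * π * ξ / ℓ) := by fun_prop
  have hφs : Continuous fun ξ : ℝ => Real.sin (2 * (n:ℝ) * π * ξ / ℓ) := by fun_prop
  have hcos' : ∀ ξ : ℝ, HasDerivAt (fun ξ : ℝ => Real.cos (2 * (n:ℝ) * π * ξ / ℓ))
      (-Real.sin (2 * (n:ℝ) * π * ξ / ℓ) * (2 * (n:ℝ) * π / ℓ)) ξ := fun ξ => (hinner ξ).cos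
  have hsin' : ∀ ξ : ℝ, HasDerivAt (fun ξ : ℝ => Real.sin (2 * (n:ℝ) * π * ξ / ℓ))
      (Real.cos (2 * (n:ℝ) * π * ξ / ℓ) * (2 * (n:ℝ) * π / ℓ)) ξ := fun ξ => (hinner ξ).sin
  -- boundary values
  have hargℓ : 2 * (n:ℝ) * π * ℓ / ℓ = (n:ℝ) * (2 * π) := by
    field_simp
  have cosℓ : Real.cos (2 * (n:ℝ) * π * ℓ / ℓ) = 1 := by
    rw [hargℓ, Real.cos_nat_mul_two_pi]
  have sinℓ : Real.sin (2 * (n:ℝ) * π * ℓ / ℓ) = 0 := by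
    rw [hargℓ]
    have : ((n:ℝ)) * (2 * π) = ((2 * n : ℕ) : ℝ) * π := by push_cast; ring
    rw [this, Real.sin_nat_mul_pi]
  have cos0 : Real.cos (2 * (n:ℝ) * π * 0 / ℓ) = 1 := by norm_num
  have sin0 : Real.sin (2 * (n:ℝ) * π * 0 / ℓ) = 0 := by norm_num
  have hP0 : P ℓ t = P 0 t := by
    have := hPper t ht 0
    simpa using this
  -- space derivative of P
  have hPx : ∀ ξ : ℝ, HasDerivAt (fun ζ => P ζ t) (Px ξ) ξ := fun ξ => sliceX hPreg ht' ξ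
  -- pointwise PDE identity for the fderivWithin
  have hpoint : ∀ ξ : ℝ, fderivWithin ℝ F S (ξ, t) (0, 1)
      = -a₀ * P ξ t + ωB ξ / ℓ - ε * (v t * Px ξ) := by
    intro ξ
    have hslice : HasDerivWithinAt (fun s => P ξ s)
        (fderivWithin ℝ F S (ξ, t) (0, 1)) (Ici 0) t := sliceT hPreg ξ ht'
    have h1 : derivWithin (fun s => P ξ s) (Ici 0) t = fderivWithin ℝ F S (ξ, t) (0, 1) :=
      hslice.derivWithin (uniqueDiffOn_Ici 0 t ht')
    have h2 : deriv (fun ζ => P ζ t) ξ = Px ξ := (hPx ξ).deriv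
    have h3 := hPpde ξ t ht
    rw [h1, h2] at h3
    linarith
  -- integration by parts
  have hBc : (∫ ξ in (0:ℝ)..ℓ, Px ξ * Real.cos (2 * (n:ℝ) * π * ξ / ℓ))
      = (2 * (n:ℝ) * π / ℓ) * ∫ ξ in (0:ℝ)..ℓ, P ξ t * Real.sin (2 * (n:ℝ) * π * ξ / ℓ) := by
    have hibp := intervalIntegral.integral_mul_deriv_eq_deriv_mul
      (u := fun ξ => P ξ t) (v := fun ξ : ℝ => Real.cos (2 * (n:ℝ) * π * ξ / ℓ))
      (u' := Px) (v' := fun ξ : ℝ => -Real.sin (2 * (n:ℝ) * π * ξ / ℓ) * (2 * (n:ℝ) * π / ℓ))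
      (fun ξ _ => hPx ξ) (fun ξ _ => hcos' ξ)
      (hPxcont.intervalIntegrable 0 ℓ)
      (((hφs.neg).mul continuous_const).intervalIntegrable 0 ℓ)
    have h1 : (∫ ξ in (0:ℝ)..ℓ,
        P ξ t * (-Real.sin (2 * (n:ℝ) * π * ξ / ℓ) * (2 * (n:ℝ) * π / ℓ)))
        = -((2 * (n:ℝ) * π / ℓ)) * ∫ ξ in (0:ℝ)..ℓ, P ξ t * Real.sin (2 * (n:ℝ) * π * ξ / ℓ) := by
      rw [← intervalIntegral.integral_const_mul]
      exact intervalIntegral.integral_congr fun ξ _ => by ring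
    simp only [h1, hP0, cosℓ, cos0] at hibp
    linarith
  have hBs : (∫ ξ in (0:ℝ)..ℓ, Px ξ * Real.sin (2 * (n:ℝ) * π * ξ / ℓ))
      = -((2 * (n:ℝ) * π / ℓ)) * ∫ ξ in (0:ℝ)..ℓ, P ξ t * Real.cos (2 * (n:ℝ) * π * ξ / ℓ) := by
    have hibp := intervalIntegral.integral_mul_deriv_eq_deriv_mul
      (u := fun ξ => P ξ t) (v := fun ξ : ℝ => Real.sin (2 * (n:ℝ) * π * ξ / ℓ))
      (u' := Px) (v' := fun ξ : ℝ => Real.cos (2 * (n:ℝ) * π * ξ / ℓ) * (2 * (n:ℝ) * π / ℓ))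
      (fun ξ _ => hPx ξ) (fun ξ _ => hsin' ξ)
      (hPxcont.intervalIntegrable 0 ℓ)
      ((hφc.mul continuous_const).intervalIntegrable 0 ℓ)
    have h1 : (∫ ξ in (0:ℝ)..ℓ,
        P ξ t * (Real.cos (2 * (n:ℝ) * π * ξ / ℓ) * (2 * (n:ℝ) * π / ℓ)))
        = (2 * (n:ℝ) * π / ℓ) * ∫ ξ in (0:ℝ)..ℓ, P ξ t * Real.cos (2 * (n:ℝ) * π * ξ / ℓ) := by
      rw [← intervalIntegral.integral_const_mul]
      exact intervalIntegral.integral_congr fun ξ _ => by ring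
    simp only [h1, hP0, sinℓ, sin0] at hibp
    linarith
  -- splitting of the derivative integral
  have hsplit : ∀ φ : ℝ → ℝ, Continuous φ →
      (∫ ξ in (0:ℝ)..ℓ, fderivWithin ℝ F S (ξ, t) (0, 1) * φ ξ)
        = -a₀ * (∫ ξ in (0:ℝ)..ℓ, P ξ t * φ ξ)
          + ((1/ℓ) * (∫ ξ in (0:ℝ)..ℓ, ωB ξ * φ ξ)
          + (-(ε * v t)) * (∫ ξ in (0:ℝ)..ℓ, Px ξ * φ ξ)) := by
    intro φ hφ
    have e1 : (∫ ξ in (0:ℝ)..ℓ, fderivWithin ℝ F S (ξ, t) (0, 1) * φ ξ)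
        = ∫ ξ in (0:ℝ)..ℓ, (-a₀ * (P ξ t * φ ξ)
            + ((1/ℓ) * (ωB ξ * φ ξ) + (-(ε * v t)) * (Px ξ * φ ξ))) := by
      refine intervalIntegral.integral_congr fun ξ _ => ?_
      rw [hpoint ξ]; ring
    rw [e1]
    rw [intervalIntegral.integral_add (f := fun ξ => -a₀ * (P ξ t * φ ξ))
      (g := fun ξ => (1/ℓ) * (ωB ξ * φ ξ) + (-(ε * v t)) * (Px ξ * φ ξ))
      ((continuous_const.mul (hPt.mul hφ)).intervalIntegrable 0 ℓ)
      (((continuous_const.mul (hωBc.mul hφ)).add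
        (continuous_const.mul (hPxcont.mul hφ))).intervalIntegrable 0 ℓ)]
    rw [intervalIntegral.integral_add (f := fun ξ => (1/ℓ) * (ωB ξ * φ ξ))
      (g := fun ξ => (-(ε * v t)) * (Px ξ * φ ξ))
      ((continuous_const.mul (hωBc.mul hφ)).intervalIntegrable 0 ℓ)
      ((continuous_const.mul (hPxcont.mul hφ)).intervalIntegrable 0 ℓ)]
    rw [intervalIntegral.integral_const_mul, intervalIntegral.integral_const_mul,
      intervalIntegral.integral_const_mul]
  constructor
  · have h := (hasDerivWithinAt_param hℓ hPreg hφc ht').const_mul (2/ℓ)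
    have hval : (2/ℓ) * (∫ ξ in (0:ℝ)..ℓ, fderivWithin ℝ F S (ξ, t) (0, 1)
          * Real.cos (2 * (n:ℝ) * π * ξ / ℓ))
        = -a₀ * fourCos ℓ (fun ξ => P ξ t) n + fourCos ℓ ωB n / ℓ
          - ε * ((2 * π * n / ℓ) * v t * fourSin ℓ (fun ξ => P ξ t) n) := by
      rw [hsplit _ hφc, hBc]
      simp only [fourCos, fourSin]
      ring
    exact hval ▸ h
  · have h := (hasDerivWithinAt_param hℓ hPreg hφs ht').const_mul (2/ℓ)
    have hval : (2/ℓ) * (∫ ξ in (0:ℝ)..ℓ, fderivWithin ℝ F S (ξ, t) (0, 1)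
          * Real.sin (2 * (n:ℝ) * π * ξ / ℓ))
        = -a₀ * fourSin ℓ (fun ξ => P ξ t) n + fourSin ℓ ωB n / ℓ
          + ε * ((2 * π * n / ℓ) * v t * fourCos ℓ (fun ξ => P ξ t) n) := by
      rw [hsplit _ hφs, hBs]
      simp only [fourCos, fourSin]
      ring
    exact hval ▸ h

/-- **Fourier reduction of the two-row model** with `ΔW(ξ) = U cos(2πξ/ℓ)`:
the Fourier coefficients of a `C¹` solution `(P, Q, x)` satisfy, for each `n ≥ 1`,
the coupled ODE system, and the force balance becomes
`2ηx' + 2kx + πU(p₁ˢ − q₁ˢ) = 0`. -/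
theorem two_row_fourier_reduction
    (ℓ k η U a₀ : ℝ) (hℓ : 0 < ℓ) (hk : 0 < k) (hη : 0 < η) (hU : 0 < U) (ha₀ : 0 < a₀)
    (ωA ωB : ℝ → ℝ)
    (hωA : ContDiff ℝ 1 ωA) (hωAper : Function.Periodic ωA ℓ)
    (hωB : ContDiff ℝ 1 ωB) (hωBper : Function.Periodic ωB ℓ)
    (hsum : ∀ ξ, ωA ξ + ωB ξ = a₀)
    (P Q : ℝ → ℝ → ℝ) (x v : ℝ → ℝ)
    (hPreg : ContDiffOn ℝ 1 (fun p : ℝ × ℝ => P p.1 p.2) (univ ×ˢ Ici 0))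
    (hQreg : ContDiffOn ℝ 1 (fun p : ℝ × ℝ => Q p.1 p.2) (univ ×ˢ Ici 0))
    (hPper : ∀ t ∈ Ici (0 : ℝ), Function.Periodic (fun ξ => P ξ t) ℓ)
    (hQper : ∀ t ∈ Ici (0 : ℝ), Function.Periodic (fun ξ => Q ξ t) ℓ)
    (hv : ∀ t ∈ Ici (0 : ℝ), HasDerivWithinAt x (v t) (Ici 0) t)
    (hvcont : ContinuousOn v (Ici 0))
    (hPpde : ∀ ξ, ∀ t ∈ Ici (0 : ℝ),
      derivWithin (fun s => P ξ s) (Ici 0) t + v t * deriv (fun ζ => P ζ t) ξ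
        = -a₀ * P ξ t + ωB ξ / ℓ)
    (hQpde : ∀ ξ, ∀ t ∈ Ici (0 : ℝ),
      derivWithin (fun s => Q ξ s) (Ici 0) t - v t * deriv (fun ζ => Q ζ t) ξ
        = -a₀ * Q ξ t + ωB ξ / ℓ)
    (hforce : ∀ t ∈ Ici (0 : ℝ),
      2 * η * v t
        = (∫ ξ in (0 : ℝ)..ℓ,
            (P ξ t - Q ξ t) * deriv (fun ζ => U * Real.cos (2 * π * ζ / ℓ)) ξ)
          - 2 * k * x t) :
    (∀ n : ℕ, 1 ≤ n → ∀ t ∈ Ici (0 : ℝ),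
      HasDerivWithinAt (fun s => fourCos ℓ (fun ξ => P ξ s) n)
        (-a₀ * fourCos ℓ (fun ξ => P ξ t) n + fourCos ℓ ωB n / ℓ
          - (2 * π * n / ℓ) * v t * fourSin ℓ (fun ξ => P ξ t) n) (Ici 0) t ∧
      HasDerivWithinAt (fun s => fourSin ℓ (fun ξ => P ξ s) n)
        (-a₀ * fourSin ℓ (fun ξ => P ξ t) n + fourSin ℓ ωB n / ℓ
          + (2 * π * n / ℓ) * v t * fourCos ℓ (fun ξ => P ξ t) n) (Ici 0) t ∧
      HasDerivWithinAt (fun s => fourCos ℓ (fun ξ => Q ξ s) n)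
        (-a₀ * fourCos ℓ (fun ξ => Q ξ t) n + fourCos ℓ ωB n / ℓ
          + (2 * π * n / ℓ) * v t * fourSin ℓ (fun ξ => Q ξ t) n) (Ici 0) t ∧
      HasDerivWithinAt (fun s => fourSin ℓ (fun ξ => Q ξ s) n)
        (-a₀ * fourSin ℓ (fun ξ => Q ξ t) n + fourSin ℓ ωB n / ℓ
          - (2 * π * n / ℓ) * v t * fourCos ℓ (fun ξ => Q ξ t) n) (Ici 0) t) ∧
    (∀ t ∈ Ici (0 : ℝ),
      2 * η * v t + 2 * k * x t
        + π * U * (fourSin ℓ (fun ξ => P ξ t) 1 - fourSin ℓ (fun ξ => Q ξ t) 1) = 0) := by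
  constructor
  · intro n hn t ht
    have hp := fourier_ode ℓ a₀ 1 hℓ ωB hωB.continuous P v hPreg hPper
      (fun ξ t ht => by linear_combination hPpde ξ t ht) n t ht
    have hq := fourier_ode ℓ a₀ (-1) hℓ ωB hωB.continuous Q v hQreg hQper
      (fun ξ t ht => by linear_combination hQpde ξ t ht) n t ht
    refine ⟨?_, ?_, ?_, ?_⟩
    · rw [show -a₀ * fourCos ℓ (fun ξ => P ξ t) n + fourCos ℓ ωB n / ℓ
          - (2 * π * n / ℓ) * v t * fourSin ℓ (fun ξ => P ξ t) n
        = -a₀ * fourCos ℓ (fun ξ => P ξ t) n + fourCos ℓ ωB n / ℓ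
          - 1 * ((2 * π * n / ℓ) * v t * fourSin ℓ (fun ξ => P ξ t) n) from by ring]
      exact hp.1
    · rw [show -a₀ * fourSin ℓ (fun ξ => P ξ t) n + fourSin ℓ ωB n / ℓ
          + (2 * π * n / ℓ) * v t * fourCos ℓ (fun ξ => P ξ t) n
        = -a₀ * fourSin ℓ (fun ξ => P ξ t) n + fourSin ℓ ωB n / ℓ
          + 1 * ((2 * π * n / ℓ) * v t * fourCos ℓ (fun ξ => P ξ t) n) from by ring]
      exact hp.2
    · rw [show -a₀ * fourCos ℓ (fun ξ => Q ξ t) n + fourCos ℓ ωB n / ℓ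
          + (2 * π * n / ℓ) * v t * fourSin ℓ (fun ξ => Q ξ t) n
        = -a₀ * fourCos ℓ (fun ξ => Q ξ t) n + fourCos ℓ ωB n / ℓ
          - (-1) * ((2 * π * n / ℓ) * v t * fourSin ℓ (fun ξ => Q ξ t) n) from by ring]
      exact hq.1
    · rw [show -a₀ * fourSin ℓ (fun ξ => Q ξ t) n + fourSin ℓ ωB n / ℓ
          - (2 * π * n / ℓ) * v t * fourCos ℓ (fun ξ => Q ξ t) n
        = -a₀ * fourSin ℓ (fun ξ => Q ξ t) n + fourSin ℓ ωB n / ℓ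
          + (-1) * ((2 * π * n / ℓ) * v t * fourCos ℓ (fun ξ => Q ξ t) n) from by ring]
      exact hq.2
  · intro t ht
    have ht' : (0:ℝ) ≤ t := ht
    have hf := hforce t ht
    have hmemt : ∀ ξ : ℝ, (ξ, t) ∈ (univ ×ˢ Ici (0:ℝ) : Set (ℝ × ℝ)) := fun ξ => by
      simp [Set.mem_prod, ht']
    have hPt : Continuous fun ξ : ℝ => P ξ t :=
      hPreg.continuousOn.comp_continuous (continuous_id.prodMk continuous_const) hmemt
    have hQt : Continuous fun ξ : ℝ => Q ξ t :=
      hQreg.continuousOn.comp_continuous (continuous_id.prodMk continuous_const) hmemt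
    have hsin : Continuous fun ξ : ℝ => Real.sin (2 * π * ξ / ℓ) := by fun_prop
    have hW : ∀ ξ : ℝ, HasDerivAt (fun ζ : ℝ => U * Real.cos (2 * π * ζ / ℓ))
        (U * (-Real.sin (2 * π * ξ / ℓ) * (2 * π / ℓ))) ξ := by
      intro ξ
      have hin : HasDerivAt (fun ζ : ℝ => 2 * π * ζ / ℓ) (2 * π / ℓ) ξ := by
        simpa using ((hasDerivAt_id ξ).const_mul (2 * π)).div_const ℓ
      exact hin.cos.const_mul U
    have hWd : ∀ ξ : ℝ, deriv (fun ζ : ℝ => U * Real.cos (2 * π * ζ / ℓ)) ξ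
        = U * (-Real.sin (2 * π * ξ / ℓ) * (2 * π / ℓ)) := fun ξ => (hW ξ).deriv
    have hsplitI : (∫ ξ in (0:ℝ)..ℓ,
          (P ξ t - Q ξ t) * deriv (fun ζ => U * Real.cos (2 * π * ζ / ℓ)) ξ)
        = (-(U * (2 * π / ℓ))) * (∫ ξ in (0:ℝ)..ℓ, P ξ t * Real.sin (2 * π * ξ / ℓ))
          + (U * (2 * π / ℓ)) * (∫ ξ in (0:ℝ)..ℓ, Q ξ t * Real.sin (2 * π * ξ / ℓ)) := by
      have e1 : (∫ ξ in (0:ℝ)..ℓ,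
            (P ξ t - Q ξ t) * deriv (fun ζ => U * Real.cos (2 * π * ζ / ℓ)) ξ)
          = ∫ ξ in (0:ℝ)..ℓ,
            ((-(U * (2 * π / ℓ))) * (P ξ t * Real.sin (2 * π * ξ / ℓ))
              + (U * (2 * π / ℓ)) * (Q ξ t * Real.sin (2 * π * ξ / ℓ))) := by
        refine intervalIntegral.integral_congr fun ξ _ => ?_
        rw [hWd ξ]; ring
      rw [e1, intervalIntegral.integral_add
          (f := fun ξ => (-(U * (2 * π / ℓ))) * (P ξ t * Real.sin (2 * π * ξ / ℓ)))
          (g := fun ξ => (U * (2 * π / ℓ)) * (Q ξ t * Real.sin (2 * π * ξ / ℓ)))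
          ((continuous_const.mul (hPt.mul hsin)).intervalIntegrable 0 ℓ)
          ((continuous_const.mul (hQt.mul hsin)).intervalIntegrable 0 ℓ),
        intervalIntegral.integral_const_mul, intervalIntegral.integral_const_mul]
    rw [hsplitI] at hf
    simp only [fourSin, Nat.cast_one, mul_one]
    linear_combination hf
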